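/- For integers p ≥ 3 and real r with 1 < r ≤ p/2, define the toroidal ball m(r) := {(i,j) ∈ (ℤ/pℤ)² \ {(0,0)} : |(i,j)|_t ≤ r}, where |(i,j)|_t² = (min(i, p−i))² + (min(j, p−j))², representatives taken in {0,…,p−1}. Let r₁ < r₂ be two consecutive radii in the (finite, ordered) set of distinct values {|(i,j)|_t : (i,j) ∈ (ℤ/pℤ)², (i,j) ≠ (0,0)}. Then Card(m(r₂)) ≤ 2 · Card(m(r₁)). -/

import Mathlib

set_option maxHeartbeats 1000000

/-- The squared toroidal norm `|(i,j)|_t² = (min(i, p−i))² + (min(j, p−j))²`,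
representatives taken in `{0,…,p−1}`. -/
def tnormSq (p : ℕ) (x : ZMod p × ZMod p) : ℕ :=
  (min x.1.val (p - x.1.val)) ^ 2 + (min x.2.val (p - x.2.val)) ^ 2

namespace Stmt10Aux


/-- one step towards zero -/
def step (y : ℤ) : ℤ := y - y.sign
/-- one step away from zero -/
def unstep (y : ℤ) : ℤ := y + y.sign

lemma step_pos {y : ℤ} (h : 0 < y) : step y = y - 1 := by
  unfold step; rw [Int.sign_eq_one_of_pos h]
lemma step_neg {y : ℤ} (h : y < 0) : step y = y + 1 := by
  unfold step; rw [Int.sign_eq_neg_one_of_neg h]; ring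
lemma unstep_pos {y : ℤ} (h : 0 < y) : unstep y = y + 1 := by
  unfold unstep; rw [Int.sign_eq_one_of_pos h]
lemma unstep_neg {y : ℤ} (h : y < 0) : unstep y = y - 1 := by
  unfold unstep; rw [Int.sign_eq_neg_one_of_neg h]; ring

/-- the injection from the sphere of squared radius N into the open ball -/
def psi (w : ℤ × ℤ) : ℤ × ℤ :=
  if |w.2| ≤ |w.1| then (step w.1, w.2)
  else if |w.1| + 2 ≤ |w.2| then (w.1, step w.2)
  else if 2 ≤ |w.1| then (step w.1, step (step w.2))
  else if w.1 = 1 then (w.2, 0)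
  else (0, w.2)

/-- decoder: a left inverse of psi on the sphere of squared radius N -/
def chi (N : ℤ) (u : ℤ × ℤ) : ℤ × ℤ :=
  if N = 5 then
    if u.2 = 0 then (1, u.1) else if u.1 = 0 then (-1, u.2) else (2 * u.1, u.2)
  else if (|u.1| + 1) ^ 2 + u.2 ^ 2 = N then (unstep u.1, u.2)
  else if u.1 ^ 2 + (|u.2| + 1) ^ 2 = N then (u.1, unstep u.2)
  else (unstep u.1, unstep (unstep u.2))

/-- master lemma about psi on a sphere point -/
lemma psi_good {p N : ℤ} (hN : 3 ≤ N) (hp2 : 4 * N ≤ p ^ 2) (hp : 0 < p)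
    {w : ℤ × ℤ} (hsph : w.1 ^ 2 + w.2 ^ 2 = N)
    (hb1 : -p < 2 * w.1) (hb1' : 2 * w.1 ≤ p)
    (hb2 : -p < 2 * w.2) (hb2' : 2 * w.2 ≤ p) :
    (psi w).1 ^ 2 + (psi w).2 ^ 2 < N ∧ psi w ≠ (0, 0) ∧
    (-p < 2 * (psi w).1 ∧ 2 * (psi w).1 ≤ p) ∧
    (-p < 2 * (psi w).2 ∧ 2 * (psi w).2 ≤ p) ∧
    chi N (psi w) = w := by
  obtain ⟨y, z⟩ := w
  simp only at hsph hb1 hb1' hb2 hb2' ⊢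
  have hsq1 : |y| ^ 2 = y ^ 2 := sq_abs y
  have hsq2 : |z| ^ 2 = z ^ 2 := sq_abs z
  have hya := abs_nonneg y
  have hza := abs_nonneg z
  by_cases hc1 : |z| ≤ |y|
  · -- R1 : move first coordinate towards 0
    have hA2 : 2 ≤ |y| := by nlinarith
    rcases (abs_pos.mp (by omega : 0 < |y|)).lt_or_gt with hy | hy
    · -- y < 0, |y| = -y, y ≤ -2
      have hay : |y| = -y := abs_of_neg hy
      have hy2 : y ≤ -2 := by omega
      have hpsi : psi (y, z) = (y + 1, z) := by
        simp only [psi, hc1, if_true, step_neg hy]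
      rw [hpsi]; dsimp only
      refine ⟨by nlinarith, by simp [Prod.ext_iff]; omega, ⟨by omega, by omega⟩,
        ⟨hb2, hb2'⟩, ?_⟩
      by_cases hN5 : N = 5
      · -- here |y| = 2, |z| = 1; so y = -2
        have hA : |y| = 2 := by nlinarith
        have hB : |z| = 1 := by nlinarith
        have hzne : z ≠ 0 := by intro h; rw [h] at hB; simp at hB
        have hy2' : y = -2 := by omega
        simp only [chi, hN5, if_true, hy2']
        norm_num [hzne]
      · have heq : (|y + 1| + 1) ^ 2 + z ^ 2 = N := by
          have : |y + 1| = -y - 1 := by rw [abs_of_neg (by omega)]; ring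
          rw [this]; nlinarith
        simp only [chi, hN5, if_false, heq, if_true, unstep_neg (by omega : y + 1 < 0)]
        norm_num
    · -- 0 < y
      have hay : |y| = y := abs_of_pos hy
      have hy2 : 2 ≤ y := by omega
      have hpsi : psi (y, z) = (y - 1, z) := by
        simp only [psi, hc1, if_true, step_pos hy]
      rw [hpsi]; dsimp only
      refine ⟨by nlinarith, by simp [Prod.ext_iff]; omega, ⟨by omega, by omega⟩,
        ⟨hb2, hb2'⟩, ?_⟩
      by_cases hN5 : N = 5
      · have hA : |y| = 2 := by nlinarith
        have hB : |z| = 1 := by nlinarith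
        have hzne : z ≠ 0 := by intro h; rw [h] at hB; simp at hB
        have hy2' : y = 2 := by omega
        simp only [chi, hN5, if_true, hy2']
        norm_num [hzne]
      · have heq : (|y - 1| + 1) ^ 2 + z ^ 2 = N := by
          have : |y - 1| = y - 1 := abs_of_nonneg (by omega)
          rw [this]; nlinarith
        simp only [chi, hN5, if_false, heq, if_true, unstep_pos (by omega : 0 < y - 1)]
        norm_num
  · by_cases hc2 : |y| + 2 ≤ |z|
    · -- R2 : move second coordinate towards 0
      have hN5 : N ≠ 5 := by
        intro h
        have hB : |z| ≤ 2 := by nlinarith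
        have hA : |y| = 0 := by omega
        nlinarith
      rcases (abs_pos.mp (by omega : 0 < |z|)).lt_or_gt with hz | hz
      · have haz : |z| = -z := abs_of_neg hz
        have hz2 : z ≤ -2 := by omega
        have hpsi : psi (y, z) = (y, z + 1) := by
          simp only [psi, hc1, if_false, hc2, if_true, step_neg hz]
        rw [hpsi]; dsimp only
        refine ⟨by nlinarith, by simp [Prod.ext_iff]; omega, ⟨hb1, hb1'⟩,
          ⟨by omega, by omega⟩, ?_⟩
        have hne1 : (|y| + 1) ^ 2 + (z + 1) ^ 2 ≠ N := by
          intro h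
          have : |z + 1| = -z - 1 := by rw [abs_of_neg (by omega)]; ring
          nlinarith [sq_abs (z+1)]
        have heq : y ^ 2 + (|z + 1| + 1) ^ 2 = N := by
          have : |z + 1| = -z - 1 := by rw [abs_of_neg (by omega)]; ring
          rw [this]; nlinarith
        simp only [chi, hN5, if_false, hne1, heq, if_true, unstep_neg (by omega : z + 1 < 0)]
        norm_num
      · have haz : |z| = z := abs_of_pos hz
        have hz2 : 2 ≤ z := by omega
        have hpsi : psi (y, z) = (y, z - 1) := by
          simp only [psi, hc1, if_false, hc2, if_true, step_pos hz]
        rw [hpsi]; dsimp only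
        refine ⟨by nlinarith, by simp [Prod.ext_iff]; omega, ⟨hb1, hb1'⟩,
          ⟨by omega, by omega⟩, ?_⟩
        have hne1 : (|y| + 1) ^ 2 + (z - 1) ^ 2 ≠ N := by
          intro h
          nlinarith
        have heq : y ^ 2 + (|z - 1| + 1) ^ 2 = N := by
          have : |z - 1| = z - 1 := abs_of_nonneg (by omega)
          rw [this]; nlinarith
        simp only [chi, hN5, if_false, hne1, heq, if_true, unstep_pos (by omega : 0 < z - 1)]
        norm_num
    · -- |z| = |y| + 1
      have hBA : |z| = |y| + 1 := by omega
      by_cases hA2 : 2 ≤ |y|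
      · -- R3
        have hN5 : N ≠ 5 := by intro h; nlinarith
        have hNval : N = |y| ^ 2 + (|y| + 1) ^ 2 := by rw [← hBA, hsq1, hsq2]; exact hsph.symm
        have hy0 : y ≠ 0 := by intro h; rw [h] at hA2; simp at hA2
        have hz0 : 3 ≤ |z| := by omega
        rcases hy0.lt_or_gt with hy | hy
        · have hay : |y| = -y := abs_of_neg hy
          rcases (abs_pos.mp (by omega : 0 < |z|)).lt_or_gt with hz | hz
          · -- y<0, z<0
            have haz : |z| = -z := abs_of_neg hz
            have hpsi : psi (y, z) = (y + 1, z + 2) := by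
              have h1 : step z = z + 1 := step_neg hz
              have h2 : step (z + 1) = z + 2 := by rw [step_neg (by omega : z + 1 < 0)]; ring
              simp only [psi, hc1, if_false, hc2, if_false, hA2, if_true, step_neg hy, h1, h2]
            rw [hpsi]; dsimp only
            refine ⟨by nlinarith, by simp [Prod.ext_iff]; omega, ⟨by omega, by omega⟩,
              ⟨by omega, by omega⟩, ?_⟩
            have ha1 : |y + 1| = -y - 1 := by rw [abs_of_neg (by omega)]; ring
            have ha2' : |z + 2| = -z - 2 := by rw [abs_of_neg (by omega)]; ring
            have hne1 : (|y + 1| + 1) ^ 2 + (z + 2) ^ 2 ≠ N := by rw [ha1]; intro h; nlinarith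
            have hne2 : (y + 1) ^ 2 + (|z + 2| + 1) ^ 2 ≠ N := by rw [ha2']; intro h; nlinarith
            simp only [chi, hN5, if_false, hne1, hne2, unstep_neg (by omega : y + 1 < 0),
              unstep_neg (by omega : z + 2 < 0), unstep_neg (by omega : z + 2 - 1 < 0)]
            simp only [Prod.mk.injEq]; omega
          · -- y<0, z>0
            have haz : |z| = z := abs_of_pos hz
            have hpsi : psi (y, z) = (y + 1, z - 2) := by
              have h1 : step z = z - 1 := step_pos hz
              have h2 : step (z - 1) = z - 2 := by rw [step_pos (by omega : (0:ℤ) < z - 1)]; ring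
              simp only [psi, hc1, if_false, hc2, if_false, hA2, if_true, step_neg hy, h1, h2]
            rw [hpsi]; dsimp only
            refine ⟨by nlinarith, by simp [Prod.ext_iff]; omega, ⟨by omega, by omega⟩,
              ⟨by omega, by omega⟩, ?_⟩
            have ha1 : |y + 1| = -y - 1 := by rw [abs_of_neg (by omega)]; ring
            have ha2' : |z - 2| = z - 2 := abs_of_nonneg (by omega)
            have hne1 : (|y + 1| + 1) ^ 2 + (z - 2) ^ 2 ≠ N := by rw [ha1]; intro h; nlinarith
            have hne2 : (y + 1) ^ 2 + (|z - 2| + 1) ^ 2 ≠ N := by rw [ha2']; intro h; nlinarith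
            simp only [chi, hN5, if_false, hne1, hne2, unstep_neg (by omega : y + 1 < 0),
              unstep_pos (by omega : (0:ℤ) < z - 2), unstep_pos (by omega : (0:ℤ) < z - 2 + 1)]
            simp only [Prod.mk.injEq]; omega
        · have hay : |y| = y := abs_of_pos hy
          rcases (abs_pos.mp (by omega : 0 < |z|)).lt_or_gt with hz | hz
          · -- y>0, z<0
            have haz : |z| = -z := abs_of_neg hz
            have hpsi : psi (y, z) = (y - 1, z + 2) := by
              have h1 : step z = z + 1 := step_neg hz
              have h2 : step (z + 1) = z + 2 := by rw [step_neg (by omega : z + 1 < 0)]; ring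
              simp only [psi, hc1, if_false, hc2, if_false, hA2, if_true, step_pos hy, h1, h2]
            rw [hpsi]; dsimp only
            refine ⟨by nlinarith, by simp [Prod.ext_iff]; omega, ⟨by omega, by omega⟩,
              ⟨by omega, by omega⟩, ?_⟩
            have ha1 : |y - 1| = y - 1 := abs_of_nonneg (by omega)
            have ha2' : |z + 2| = -z - 2 := by rw [abs_of_neg (by omega)]; ring
            have hne1 : (|y - 1| + 1) ^ 2 + (z + 2) ^ 2 ≠ N := by rw [ha1]; intro h; nlinarith
            have hne2 : (y - 1) ^ 2 + (|z + 2| + 1) ^ 2 ≠ N := by rw [ha2']; intro h; nlinarith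
            simp only [chi, hN5, if_false, hne1, hne2, unstep_pos (by omega : (0:ℤ) < y - 1),
              unstep_neg (by omega : z + 2 < 0), unstep_neg (by omega : z + 2 - 1 < 0)]
            simp only [Prod.mk.injEq]; omega
          · -- y>0, z>0
            have haz : |z| = z := abs_of_pos hz
            have hpsi : psi (y, z) = (y - 1, z - 2) := by
              have h1 : step z = z - 1 := step_pos hz
              have h2 : step (z - 1) = z - 2 := by rw [step_pos (by omega : (0:ℤ) < z - 1)]; ring
              simp only [psi, hc1, if_false, hc2, if_false, hA2, if_true, step_pos hy, h1, h2]
            rw [hpsi]; dsimp only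
            refine ⟨by nlinarith, by simp [Prod.ext_iff]; omega, ⟨by omega, by omega⟩,
              ⟨by omega, by omega⟩, ?_⟩
            have ha1 : |y - 1| = y - 1 := abs_of_nonneg (by omega)
            have ha2' : |z - 2| = z - 2 := abs_of_nonneg (by omega)
            have hne1 : (|y - 1| + 1) ^ 2 + (z - 2) ^ 2 ≠ N := by rw [ha1]; intro h; nlinarith
            have hne2 : (y - 1) ^ 2 + (|z - 2| + 1) ^ 2 ≠ N := by rw [ha2']; intro h; nlinarith
            simp only [chi, hN5, if_false, hne1, hne2, unstep_pos (by omega : (0:ℤ) < y - 1),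
              unstep_pos (by omega : (0:ℤ) < z - 2), unstep_pos (by omega : (0:ℤ) < z - 2 + 1)]
            simp only [Prod.mk.injEq]; omega
      · -- R4 : |y| = 1, |z| = 2, N = 5
        have hA1 : |y| = 1 := by
          rcases (by omega : |y| = 0 ∨ |y| = 1) with h | h
          · exfalso
            have hz1 : |z| = 1 := by omega
            have : N = 1 := by rw [← hsq1, ← hsq2, h, hz1] at hsph; linarith
            omega
          · exact h
        have hB2 : |z| = 2 := by omega
        have hNval : N = 5 := by rw [← hsq1, ← hsq2] at hsph; rw [hA1, hB2] at hsph; linarith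
        have hp5 : 5 ≤ p := by nlinarith
        have hz0 : z ≠ 0 := by intro h; rw [h] at hB2; simp at hB2
        have hpsi0 : psi (y, z) = if y = 1 then (z, 0) else (0, z) := by
          simp only [psi, hc1, if_false, hc2, if_false, hA2, if_false]
        rcases (abs_eq (by norm_num : (0:ℤ) ≤ 2)).mp hB2 with hz2 | hz2 <;>
        rcases (abs_eq (by norm_num : (0:ℤ) ≤ 1)).mp hA1 with hy1 | hy1
        · have hpsi : psi (y, z) = (z, 0) := by rw [hpsi0, if_pos hy1]
          rw [hpsi]; dsimp only
          refine ⟨by rw [hz2]; omega, by simp [Prod.ext_iff]; omega,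
            ⟨by omega, by omega⟩, ⟨by omega, by omega⟩, ?_⟩
          simp only [chi, hNval]
          norm_num [hy1]
        · have hpsi : psi (y, z) = (0, z) := by rw [hpsi0, if_neg (by omega)]
          rw [hpsi]; dsimp only
          refine ⟨by rw [hz2]; omega, by simp [Prod.ext_iff]; omega,
            ⟨by omega, by omega⟩, ⟨by omega, by omega⟩, ?_⟩
          simp only [chi, hNval]
          norm_num [hz0, hy1]
        · have hpsi : psi (y, z) = (z, 0) := by rw [hpsi0, if_pos hy1]
          rw [hpsi]; dsimp only
          refine ⟨by rw [hz2]; omega, by simp [Prod.ext_iff]; omega,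
            ⟨by omega, by omega⟩, ⟨by omega, by omega⟩, ?_⟩
          simp only [chi, hNval]
          norm_num [hy1]
        · have hpsi : psi (y, z) = (0, z) := by rw [hpsi0, if_neg (by omega)]
          rw [hpsi]; dsimp only
          refine ⟨by rw [hz2]; omega, by simp [Prod.ext_iff]; omega,
            ⟨by omega, by omega⟩, ⟨by omega, by omega⟩, ?_⟩
          simp only [chi, hNval]
          norm_num [hz0, hy1]



/-- balanced integer representative of an element of `ZMod p` -/
def e (p : ℕ) [NeZero p] (k : ZMod p) : ℤ :=
  if 2 * k.val ≤ p then (k.val : ℤ) else (k.val : ℤ) - p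

variable {p : ℕ} [NeZero p]

lemma e_bounds (k : ZMod p) : -(p : ℤ) < 2 * e p k ∧ 2 * e p k ≤ p := by
  have hv : k.val < p := ZMod.val_lt k
  have hp : 0 < p := Nat.pos_of_ne_zero (NeZero.ne p)
  unfold e; split_ifs with h <;> constructor <;> omega

lemma e_cast (k : ZMod p) : ((e p k : ℤ) : ZMod p) = k := by
  unfold e; split_ifs with h
  · simp [ZMod.natCast_val, ZMod.intCast_zmod_cast]
  · push_cast
    simp [ZMod.natCast_val, ZMod.intCast_zmod_cast, ZMod.natCast_self]

lemma abs_e (k : ZMod p) : ((min k.val (p - k.val) : ℕ) : ℤ) = |e p k| := by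
  have hv : k.val < p := ZMod.val_lt k
  unfold e; split_ifs with h
  · rw [min_eq_left (by omega), abs_of_nonneg (by positivity)]
  · rw [min_eq_right (by omega), abs_of_neg (by omega : ((k.val : ℤ) - p) < 0)]
    push_cast [Nat.cast_sub hv.le]
    ring

lemma tnormSq_eq (x : ZMod p × ZMod p) :
    (tnormSq p x : ℤ) = (e p x.1) ^ 2 + (e p x.2) ^ 2 := by
  unfold tnormSq
  rw [Nat.cast_add, Nat.cast_pow, Nat.cast_pow, abs_e x.1, abs_e x.2, sq_abs, sq_abs]

lemma e_intCast {w : ℤ} (h1 : -(p : ℤ) < 2 * w) (h2 : 2 * w ≤ p) :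
    e p ((w : ZMod p)) = w := by
  have hp : 0 < p := Nat.pos_of_ne_zero (NeZero.ne p)
  have hval : (((w : ZMod p)).val : ℤ) = w % p := ZMod.val_intCast w
  have hmod : w % (p : ℤ) = if 0 ≤ w then w else w + p := by
    split_ifs with h
    · exact Int.emod_eq_of_lt h (by omega)
    · have h3 : (w + p) % p = w + p := Int.emod_eq_of_lt (by omega) (by omega)
      have h4 : (w + p) % p = w % p := by
        have := Int.add_mul_emod_self_left (a := w) (b := (p : ℤ)) (c := 1)
        simpa using this
      omega
  unfold e
  split_ifs with h
  · have : 2 * (((w : ZMod p)).val : ℤ) ≤ p := by exact_mod_cast h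
    split_ifs at hmod with h5 <;> omega
  · have : ¬(2 * (((w : ZMod p)).val : ℤ) ≤ p) := by exact_mod_cast h
    split_ifs at hmod with h5 <;> omega

lemma e_eq_zero_iff (k : ZMod p) : e p k = 0 ↔ k = 0 := by
  constructor
  · intro h
    have := e_cast k
    rw [h] at this
    simpa using this.symm
  · intro h
    subst h
    have hp : 0 < p := Nat.pos_of_ne_zero (NeZero.ne p)
    unfold e
    rw [ZMod.val_zero]
    simp

end Stmt10Aux

open Stmt10Aux in
theorem stmt_10 (p : ℕ) [NeZero p] (hp : 3 ≤ p) (r₁ r₂ : ℝ)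
    (hr₁pos : 1 < r₁) (hr₂le : r₂ ≤ (p : ℝ) / 2) (hlt : r₁ < r₂)
    (hr₁val : ∃ x : ZMod p × ZMod p, x ≠ 0 ∧ r₁ = Real.sqrt (tnormSq p x))
    (hr₂val : ∃ x : ZMod p × ZMod p, x ≠ 0 ∧ r₂ = Real.sqrt (tnormSq p x))
    (hconsec : ∀ d : ℝ,
      (∃ x : ZMod p × ZMod p, x ≠ 0 ∧ d = Real.sqrt (tnormSq p x)) →
      ¬(r₁ < d ∧ d < r₂)) :
    Set.ncard {x : ZMod p × ZMod p | x ≠ 0 ∧ Real.sqrt (tnormSq p x) ≤ r₂} ≤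
      2 * Set.ncard {x : ZMod p × ZMod p | x ≠ 0 ∧ Real.sqrt (tnormSq p x) ≤ r₁} := by
  classical
  obtain ⟨x₂, hx₂0, hr₂v⟩ := hr₂val
  obtain ⟨x₁, hx₁0, hr₁v⟩ := hr₁val
  set N₁ := tnormSq p x₁ with hN₁def
  set N₂ := tnormSq p x₂ with hN₂def
  set B₁ := {x : ZMod p × ZMod p | x ≠ 0 ∧ Real.sqrt (tnormSq p x) ≤ r₁} with hB₁def
  set B₂ := {x : ZMod p × ZMod p | x ≠ 0 ∧ Real.sqrt (tnormSq p x) ≤ r₂} with hB₂def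
  set S := {x : ZMod p × ZMod p | x ≠ 0 ∧ tnormSq p x = N₂} with hSdef
  have hs₁ : Real.sqrt N₁ = r₁ := hr₁v.symm
  have hs₂ : Real.sqrt N₂ = r₂ := hr₂v.symm
  have hsq₁ : (Real.sqrt (N₁ : ℝ)) ^ 2 = (N₁ : ℝ) := Real.sq_sqrt (by positivity)
  have hsq₂ : (Real.sqrt (N₂ : ℝ)) ^ 2 = (N₂ : ℝ) := Real.sq_sqrt (by positivity)
  have hs₁pos : 1 < Real.sqrt (N₁ : ℝ) := by rw [hs₁]; exact hr₁pos
  have hs₁₂ : Real.sqrt (N₁ : ℝ) < Real.sqrt (N₂ : ℝ) := by rw [hs₁, hs₂]; exact hlt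
  have hN₁gt : (1 : ℝ) < N₁ := by nlinarith [Real.sqrt_nonneg (N₁ : ℝ)]
  have hN₁₂ : (N₁ : ℝ) < N₂ := by
    nlinarith [Real.sqrt_nonneg (N₁ : ℝ), Real.sqrt_nonneg (N₂ : ℝ)]
  have hN₁2 : 2 ≤ N₁ := by
    have h1 : (1 : ℕ) < N₁ := by exact_mod_cast hN₁gt
    omega
  have hN₁₂n : N₁ < N₂ := by exact_mod_cast hN₁₂
  have hN₂3 : 3 ≤ (N₂ : ℤ) := by omega
  have hp0 : 0 < p := Nat.pos_of_ne_zero (NeZero.ne p)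
  have hpz : (0 : ℤ) < (p : ℤ) := by exact_mod_cast hp0
  have hp2 : 4 * (N₂ : ℤ) ≤ (p : ℤ) ^ 2 := by
    have h2 : Real.sqrt (N₂ : ℝ) ≤ (p : ℝ) / 2 := by rw [hs₂]; exact hr₂le
    have h4 : 4 * (N₂ : ℝ) ≤ (p : ℝ) ^ 2 := by
      nlinarith [Real.sqrt_nonneg (N₂ : ℝ)]
    exact_mod_cast h4
  -- the ball of radius r₂ is contained in the ball of radius r₁ union the sphere
  have hsub : B₂ ⊆ B₁ ∪ S := by
    rintro x ⟨hx0, hxle⟩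
    by_cases h : Real.sqrt (tnormSq p x) ≤ r₁
    · exact Or.inl ⟨hx0, h⟩
    · right
      refine ⟨hx0, ?_⟩
      push_neg at h
      have hcon := hconsec (Real.sqrt (tnormSq p x)) ⟨x, hx0, rfl⟩
      have heq : Real.sqrt (tnormSq p x) = r₂ := by
        rcases lt_or_eq_of_le hxle with h2 | h2
        · exact absurd ⟨h, h2⟩ hcon
        · exact h2
      rw [← hs₂] at heq
      have : (tnormSq p x : ℝ) = (N₂ : ℝ) :=
        (Real.sqrt_inj (by positivity) (by positivity)).mp heq
      exact_mod_cast this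
  -- the injection from the sphere into the small ball
  set f : ZMod p × ZMod p → ZMod p × ZMod p := fun x =>
    ((((psi (e p x.1, e p x.2)).1 : ℤ) : ZMod p),
     (((psi (e p x.1, e p x.2)).2 : ℤ) : ZMod p)) with hfdef
  have key : ∀ x ∈ S, f x ∈ B₁ ∧
      chi (N₂ : ℤ) (psi (e p x.1, e p x.2)) = (e p x.1, e p x.2) ∧
      e p (f x).1 = (psi (e p x.1, e p x.2)).1 ∧
      e p (f x).2 = (psi (e p x.1, e p x.2)).2 := by
    rintro x ⟨hx0, hxN⟩
    have hsph : (e p x.1) ^ 2 + (e p x.2) ^ 2 = (N₂ : ℤ) := by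
      rw [← tnormSq_eq]; exact_mod_cast hxN
    obtain ⟨hnorm, hne, ⟨hb1, hb1'⟩, ⟨hb2, hb2'⟩, hchi⟩ :=
      psi_good hN₂3 hp2 hpz (w := (e p x.1, e p x.2)) hsph
        (e_bounds x.1).1 (e_bounds x.1).2 (e_bounds x.2).1 (e_bounds x.2).2
    have he1 : e p (f x).1 = (psi (e p x.1, e p x.2)).1 := e_intCast hb1 hb1'
    have he2 : e p (f x).2 = (psi (e p x.1, e p x.2)).2 := e_intCast hb2 hb2'
    have hfne : f x ≠ 0 := by
      intro h
      apply hne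
      have h1 : e p (f x).1 = 0 := by rw [h]; simpa using e_intCast (p := p) (w := 0) (by omega) (by omega)
      have h2 : e p (f x).2 = 0 := by rw [h]; simpa using e_intCast (p := p) (w := 0) (by omega) (by omega)
      rw [he1] at h1
      rw [he2] at h2
      exact Prod.ext_iff.mpr ⟨h1, h2⟩
    have htf : (tnormSq p (f x) : ℤ) =
        (psi (e p x.1, e p x.2)).1 ^ 2 + (psi (e p x.1, e p x.2)).2 ^ 2 := by
      rw [tnormSq_eq, he1, he2]
    have htflt : (tnormSq p (f x) : ℤ) < (N₂ : ℤ) := by rw [htf]; exact hnorm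
    have hlt2 : Real.sqrt (tnormSq p (f x)) < r₂ := by
      rw [← hs₂]
      apply Real.sqrt_lt_sqrt (by positivity)
      exact_mod_cast htflt
    have hcon := hconsec (Real.sqrt (tnormSq p (f x))) ⟨f x, hfne, rfl⟩
    have hle1 : Real.sqrt (tnormSq p (f x)) ≤ r₁ := by
      by_contra hgt
      push_neg at hgt
      exact hcon ⟨hgt, hlt2⟩
    exact ⟨⟨hfne, hle1⟩, hchi, he1, he2⟩
  have hSB : S.ncard ≤ B₁.ncard := by
    apply Set.ncard_le_ncard_of_injOn f (fun x hx => (key x hx).1) ?_ (Set.toFinite _)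
    intro x hx y hy hxy
    obtain ⟨-, hchix, he1x, he2x⟩ := key x hx
    obtain ⟨-, hchiy, he1y, he2y⟩ := key y hy
    have hpsieq : psi (e p x.1, e p x.2) = psi (e p y.1, e p y.2) := by
      refine Prod.ext_iff.mpr ⟨?_, ?_⟩
      · rw [← he1x, ← he1y, hxy]
      · rw [← he2x, ← he2y, hxy]
    have hweq : ((e p x.1, e p x.2) : ℤ × ℤ) = (e p y.1, e p y.2) := by
      rw [← hchix, ← hchiy, hpsieq]
    have hw1 : e p x.1 = e p y.1 := congrArg Prod.fst hweq
    have hw2 : e p x.2 = e p y.2 := congrArg Prod.snd hweq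
    refine Prod.ext_iff.mpr ⟨?_, ?_⟩
    · calc x.1 = ((e p x.1 : ℤ) : ZMod p) := (e_cast x.1).symm
        _ = ((e p y.1 : ℤ) : ZMod p) := by rw [hw1]
        _ = y.1 := e_cast y.1
    · calc x.2 = ((e p x.2 : ℤ) : ZMod p) := (e_cast x.2).symm
        _ = ((e p y.2 : ℤ) : ZMod p) := by rw [hw2]
        _ = y.2 := e_cast y.2
  calc B₂.ncard ≤ (B₁ ∪ S).ncard := Set.ncard_le_ncard hsub (Set.toFinite _)
    _ ≤ B₁.ncard + S.ncard := Set.ncard_union_le _ _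
    _ ≤ 2 * B₁.ncard := by omega
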